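/- Let r ∈ (0,1). There exists a constant C = C(r) > 0 such that for every f ∈ L¹(0,∞) ∩ L²(0,∞) with finite Gagliardo seminorm [f]_{r,(0,∞)}, one has ‖f‖_{L²(0,∞)} ≤ C ‖f‖_{L¹(0,∞)}^{2r/(1+2r)} [f]_{r,(0,∞)}^{1/(1+2r)}. -/

import Mathlib

open MeasureTheory ENNReal

/-- The squared Gagliardo seminorm `[f]_{s,Ω}²` for an open set `Ω ⊆ ℝ` (dimension `N = 1`). -/
noncomputable def gagliardoSq1 (s : ℝ) (Ω : Set ℝ) (f : ℝ → ℝ) : ℝ≥0∞ :=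
  ∫⁻ x in Ω, ∫⁻ y in Ω, ENNReal.ofReal ((f x - f y) ^ 2 / |x - y| ^ (1 + 2 * s))

lemma kernel_meas (r : ℝ) (hr : 0 < r) (f : ℝ → ℝ) (hf : Measurable f) :
    Measurable (Function.uncurry fun x y : ℝ =>
      ENNReal.ofReal ((f x - f y) ^ 2 / |x - y| ^ (1 + 2 * r))) := by
  apply ENNReal.measurable_ofReal.comp
  apply Measurable.div
  · exact (((hf.comp measurable_fst).sub (hf.comp measurable_snd)).pow_const 2)
  · exact (Real.continuous_rpow_const (by linarith)).measurable.comp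
      ((measurable_fst.sub measurable_snd).abs)

lemma key_ineq (r : ℝ) (hr : 0 < r) (f : ℝ → ℝ) (hf : Measurable f)
    (h : ℝ) (hh : 0 < h) :
    ENNReal.ofReal h * ∫⁻ x in Set.Ioi (0:ℝ), ENNReal.ofReal (f x ^ 2) ≤
      2 * ((∫⁻ x in Set.Ioi (0:ℝ), ENNReal.ofReal |f x|) *
           (∫⁻ x in Set.Ioi (0:ℝ), ENNReal.ofReal |f x|))
        + ENNReal.ofReal (h ^ (1 + 2 * r)) * gagliardoSq1 r (Set.Ioi 0) f := by
  set A := ∫⁻ x in Set.Ioi (0:ℝ), ENNReal.ofReal |f x| with hA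
  by_cases hAtop : A = ⊤
  · have : (2:ℝ≥0∞) * (A * A) = ⊤ := by simp [hAtop]
    rw [this, top_add]
    exact le_top
  have hs0 : (0:ℝ) ≤ 1 + 2 * r := by linarith
  -- pointwise-in-x bound
  have hx_bound : ∀ x ∈ Set.Ioi (0:ℝ),
      ENNReal.ofReal h * ENNReal.ofReal (f x ^ 2) ≤
        2 * ENNReal.ofReal |f x| * A
          + ENNReal.ofReal (h ^ (1 + 2 * r)) *
            ∫⁻ y in Set.Ioi (0:ℝ), ENNReal.ofReal ((f x - f y) ^ 2 / |x - y| ^ (1 + 2 * r)) := by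
    intro x hx
    have hsub : Set.Ioo x (x + h) ⊆ Set.Ioi (0:ℝ) := fun y hy => lt_trans hx hy.1
    have step1 : ENNReal.ofReal h * ENNReal.ofReal (f x ^ 2)
        = ∫⁻ _ in Set.Ioo x (x + h), ENNReal.ofReal (f x ^ 2) := by
      rw [setLIntegral_const, Real.volume_Ioo, add_sub_cancel_left, mul_comm]
    have pw : ∀ y : ℝ, ENNReal.ofReal (f x ^ 2) ≤
        2 * (ENNReal.ofReal |f x| * ENNReal.ofReal |f y|)
          + ENNReal.ofReal ((f x - f y) ^ 2) := by
      intro y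
      have hre : f x ^ 2 ≤ 2 * (|f x| * |f y|) + (f x - f y) ^ 2 := by
        nlinarith [abs_mul (f x) (f y), le_abs_self (f x * f y), sq_nonneg (f y)]
      calc ENNReal.ofReal (f x ^ 2) ≤ ENNReal.ofReal (2 * (|f x| * |f y|) + (f x - f y) ^ 2) :=
            ENNReal.ofReal_le_ofReal hre
        _ = 2 * (ENNReal.ofReal |f x| * ENNReal.ofReal |f y|) + ENNReal.ofReal ((f x - f y) ^ 2) := by
            rw [ENNReal.ofReal_add (by positivity) (by positivity),
              ENNReal.ofReal_mul (by norm_num), ENNReal.ofReal_mul (abs_nonneg _),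
              ENNReal.ofReal_ofNat]
    have step2 : (∫⁻ _ in Set.Ioo x (x + h), ENNReal.ofReal (f x ^ 2)) ≤
        ∫⁻ y in Set.Ioo x (x + h),
          (2 * (ENNReal.ofReal |f x| * ENNReal.ofReal |f y|)
            + ENNReal.ofReal ((f x - f y) ^ 2)) :=
      lintegral_mono fun y => pw y
    have meas1 : Measurable fun y : ℝ =>
        2 * (ENNReal.ofReal |f x| * ENNReal.ofReal |f y|) :=
      (measurable_const.mul ((measurable_const.mul
        (ENNReal.measurable_ofReal.comp hf.abs))))
    have step3 : (∫⁻ y in Set.Ioo x (x + h),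
          (2 * (ENNReal.ofReal |f x| * ENNReal.ofReal |f y|)
            + ENNReal.ofReal ((f x - f y) ^ 2)))
        = (∫⁻ y in Set.Ioo x (x + h), 2 * (ENNReal.ofReal |f x| * ENNReal.ofReal |f y|))
          + ∫⁻ y in Set.Ioo x (x + h), ENNReal.ofReal ((f x - f y) ^ 2) :=
      lintegral_add_left meas1 _
    have term1 : (∫⁻ y in Set.Ioo x (x + h), 2 * (ENNReal.ofReal |f x| * ENNReal.ofReal |f y|))
        ≤ 2 * ENNReal.ofReal |f x| * A := by
      have : ∀ y : ℝ, 2 * (ENNReal.ofReal |f x| * ENNReal.ofReal |f y|)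
          = (2 * ENNReal.ofReal |f x|) * ENNReal.ofReal |f y| := fun y => by ring
      simp_rw [this]
      rw [lintegral_const_mul' _ _ (by finiteness)]
      refine mul_le_mul_right ?_ _
      exact lintegral_mono' (Measure.restrict_mono hsub le_rfl) le_rfl
    have term2 : (∫⁻ y in Set.Ioo x (x + h), ENNReal.ofReal ((f x - f y) ^ 2))
        ≤ ENNReal.ofReal (h ^ (1 + 2 * r)) *
            ∫⁻ y in Set.Ioi (0:ℝ), ENNReal.ofReal ((f x - f y) ^ 2 / |x - y| ^ (1 + 2 * r)) := by
      have pw2 : ∀ y ∈ Set.Ioo x (x + h), ENNReal.ofReal ((f x - f y) ^ 2) ≤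
          ENNReal.ofReal (h ^ (1 + 2 * r)) *
            ENNReal.ofReal ((f x - f y) ^ 2 / |x - y| ^ (1 + 2 * r)) := by
        intro y hy
        have hxy : 0 < |x - y| := by
          rw [abs_sub_comm, abs_of_pos (by linarith [hy.1])]
          linarith [hy.1]
        have hle : |x - y| ≤ h := by
          rw [abs_sub_comm, abs_of_pos (by linarith [hy.1])]
          linarith [hy.2]
        have h1 : |x - y| ^ (1 + 2 * r) ≤ h ^ (1 + 2 * r) :=
          Real.rpow_le_rpow (abs_nonneg _) hle hs0
        have h2 : (0:ℝ) < |x - y| ^ (1 + 2 * r) := Real.rpow_pos_of_pos hxy _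
        have hre : (f x - f y) ^ 2 ≤
            h ^ (1 + 2 * r) * ((f x - f y) ^ 2 / |x - y| ^ (1 + 2 * r)) := by
          have hmul := mul_le_mul_of_nonneg_left ((one_le_div h2).mpr h1) (sq_nonneg (f x - f y))
          calc (f x - f y) ^ 2 = (f x - f y) ^ 2 * 1 := by ring
            _ ≤ (f x - f y) ^ 2 * (h ^ (1 + 2 * r) / |x - y| ^ (1 + 2 * r)) := hmul
            _ = h ^ (1 + 2 * r) * ((f x - f y) ^ 2 / |x - y| ^ (1 + 2 * r)) := by ring
        calc ENNReal.ofReal ((f x - f y) ^ 2)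
            ≤ ENNReal.ofReal (h ^ (1 + 2 * r) * ((f x - f y) ^ 2 / |x - y| ^ (1 + 2 * r))) :=
              ENNReal.ofReal_le_ofReal hre
          _ = _ := ENNReal.ofReal_mul (by positivity)
      calc (∫⁻ y in Set.Ioo x (x + h), ENNReal.ofReal ((f x - f y) ^ 2))
          ≤ ∫⁻ y in Set.Ioo x (x + h), ENNReal.ofReal (h ^ (1 + 2 * r)) *
              ENNReal.ofReal ((f x - f y) ^ 2 / |x - y| ^ (1 + 2 * r)) := by
            refine lintegral_mono_ae ?_
            exact (ae_restrict_iff' measurableSet_Ioo).2 (ae_of_all _ pw2)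
        _ = ENNReal.ofReal (h ^ (1 + 2 * r)) *
              ∫⁻ y in Set.Ioo x (x + h), ENNReal.ofReal ((f x - f y) ^ 2 / |x - y| ^ (1 + 2 * r)) :=
            lintegral_const_mul' _ _ (by finiteness)
        _ ≤ _ := by
            refine mul_le_mul_right ?_ _
            exact lintegral_mono' (Measure.restrict_mono hsub le_rfl) le_rfl
    calc ENNReal.ofReal h * ENNReal.ofReal (f x ^ 2)
        = ∫⁻ _ in Set.Ioo x (x + h), ENNReal.ofReal (f x ^ 2) := step1
      _ ≤ _ := step2
      _ = _ := step3
      _ ≤ _ := add_le_add term1 term2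
  -- integrate over x
  have meas2 : Measurable fun x : ℝ => 2 * ENNReal.ofReal |f x| * A :=
    (measurable_const.mul (ENNReal.measurable_ofReal.comp hf.abs)).mul measurable_const
  calc ENNReal.ofReal h * ∫⁻ x in Set.Ioi (0:ℝ), ENNReal.ofReal (f x ^ 2)
      = ∫⁻ x in Set.Ioi (0:ℝ), ENNReal.ofReal h * ENNReal.ofReal (f x ^ 2) :=
        (lintegral_const_mul' _ _ (by finiteness)).symm
    _ ≤ ∫⁻ x in Set.Ioi (0:ℝ), (2 * ENNReal.ofReal |f x| * A
          + ENNReal.ofReal (h ^ (1 + 2 * r)) *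
            ∫⁻ y in Set.Ioi (0:ℝ), ENNReal.ofReal ((f x - f y) ^ 2 / |x - y| ^ (1 + 2 * r))) := by
        refine lintegral_mono_ae ?_
        exact (ae_restrict_iff' measurableSet_Ioi).2 (ae_of_all _ hx_bound)
    _ = (∫⁻ x in Set.Ioi (0:ℝ), 2 * ENNReal.ofReal |f x| * A)
          + ∫⁻ x in Set.Ioi (0:ℝ), ENNReal.ofReal (h ^ (1 + 2 * r)) *
            ∫⁻ y in Set.Ioi (0:ℝ), ENNReal.ofReal ((f x - f y) ^ 2 / |x - y| ^ (1 + 2 * r)) :=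
        lintegral_add_left meas2 _
    _ ≤ 2 * (A * A) + ENNReal.ofReal (h ^ (1 + 2 * r)) * gagliardoSq1 r (Set.Ioi 0) f := by
        refine add_le_add ?_ ?_
        · have : ∀ x : ℝ, 2 * ENNReal.ofReal |f x| * A = (2 * A) * ENNReal.ofReal |f x| :=
            fun x => by ring
          simp_rw [this]
          rw [lintegral_const_mul' _ _ (ENNReal.mul_ne_top (by simp) hAtop)]
          exact le_of_eq (mul_assoc 2 A A)
        · rw [lintegral_const_mul' _ _ (by finiteness)]
          rfl

lemma gagliardo_congr (s : ℝ) (Ω : Set ℝ) (f g : ℝ → ℝ)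
    (h : f =ᵐ[volume.restrict Ω] g) : gagliardoSq1 s Ω f = gagliardoSq1 s Ω g := by
  unfold gagliardoSq1
  refine lintegral_congr_ae ?_
  filter_upwards [h] with x hx
  refine lintegral_congr_ae ?_
  filter_upwards [h] with y hy
  rw [hx, hy]

lemma sqrt3_le : ((ENNReal.ofReal 3) ^ (1/2:ℝ)) ≤ ENNReal.ofReal 2 := by
  rw [ENNReal.ofReal_rpow_of_pos (by norm_num)]
  refine ENNReal.ofReal_le_ofReal ?_
  have h1 : (3:ℝ) ^ (1/2:ℝ) ≤ (4:ℝ) ^ (1/2:ℝ) :=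
    Real.rpow_le_rpow (by norm_num) (by norm_num) (by norm_num)
  have h2 : (4:ℝ) ^ (1/2:ℝ) = 2 := by
    rw [show (4:ℝ) = 2 ^ (2:ℕ) by norm_num, ← Real.rpow_natCast 2 2,
      ← Real.rpow_mul (by norm_num)]
    norm_num
  linarith


/-- Fractional Nash inequality on the half line `(0, ∞)`. -/
theorem nash_half_line (r : ℝ) (hr : r ∈ Set.Ioo (0 : ℝ) 1) :
    ∃ C : ℝ, 0 < C ∧ ∀ f : ℝ → ℝ,
      MemLp f 1 (volume.restrict (Set.Ioi (0 : ℝ))) →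
      MemLp f 2 (volume.restrict (Set.Ioi (0 : ℝ))) →
      gagliardoSq1 r (Set.Ioi 0) f ≠ ⊤ →
      eLpNorm f 2 (volume.restrict (Set.Ioi (0 : ℝ))) ≤
        ENNReal.ofReal C * eLpNorm f 1 (volume.restrict (Set.Ioi (0 : ℝ))) ^ (2 * r / (1 + 2 * r)) *
          gagliardoSq1 r (Set.Ioi 0) f ^ (1 / (2 * (1 + 2 * r))) := by
  obtain ⟨hr0, hr1⟩ := hr
  have hs_pos : (0:ℝ) < 1 + 2 * r := by linarith
  have hs_ne : (1 + 2*r : ℝ) ≠ 0 := ne_of_gt hs_pos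
  refine ⟨2, by norm_num, ?_⟩
  intro f hf1 hf2 hGf
  -- measurable representative
  have hfm := hf1.1
  set g : ℝ → ℝ := hfm.mk f with hgdef
  have hgm : Measurable g := hfm.stronglyMeasurable_mk.measurable
  have hfg : f =ᵐ[volume.restrict (Set.Ioi (0:ℝ))] g := hfm.ae_eq_mk
  have hG_eq : gagliardoSq1 r (Set.Ioi 0) f = gagliardoSq1 r (Set.Ioi 0) g :=
    gagliardo_congr _ _ _ _ hfg
  have h1_eq : eLpNorm f 1 (volume.restrict (Set.Ioi (0:ℝ)))
      = eLpNorm g 1 (volume.restrict (Set.Ioi (0:ℝ))) := eLpNorm_congr_ae hfg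
  have h2_eq : eLpNorm f 2 (volume.restrict (Set.Ioi (0:ℝ)))
      = eLpNorm g 2 (volume.restrict (Set.Ioi (0:ℝ))) := eLpNorm_congr_ae hfg
  rw [hG_eq] at hGf
  rw [h1_eq, h2_eq, hG_eq]
  set A := ∫⁻ x in Set.Ioi (0:ℝ), ENNReal.ofReal |g x| with hAdef
  set B2 := ∫⁻ x in Set.Ioi (0:ℝ), ENNReal.ofReal (g x ^ 2) with hB2def
  set G := gagliardoSq1 r (Set.Ioi 0) g with hGdef
  have hA1 : eLpNorm g 1 (volume.restrict (Set.Ioi (0:ℝ))) = A := by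
    rw [eLpNorm_one_eq_lintegral_enorm, hAdef]
    refine lintegral_congr fun x => ?_
    rw [Real.enorm_eq_ofReal_abs]
  have hB2' : eLpNorm g 2 (volume.restrict (Set.Ioi (0:ℝ))) = B2 ^ (1/2 : ℝ) := by
    rw [eLpNorm_eq_lintegral_rpow_enorm_toReal two_ne_zero ENNReal.ofNat_ne_top, hB2def]
    rw [ENNReal.toReal_ofNat]
    congr 1
    refine lintegral_congr fun x => ?_
    rw [Real.enorm_eq_ofReal_abs,
      ENNReal.ofReal_rpow_of_nonneg (abs_nonneg _) (by norm_num),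
      show (2:ℝ) = ((2:ℕ):ℝ) by norm_num, Real.rpow_natCast, sq_abs]
  have hAtop : A ≠ ⊤ := by
    rw [← hA1]; exact (h1_eq ▸ hf1.2).ne
  have hB2top : B2 ≠ ⊤ := by
    intro htop
    have := h2_eq ▸ hf2.2
    rw [hB2', htop, ENNReal.top_rpow_of_pos (by norm_num)] at this
    exact absurd this (lt_irrefl _)
  rw [hA1, hB2']
  -- main bound on B2 in degenerate and generic cases, then conclude
  by_cases hA0 : A = 0
  · -- f vanishes a.e.
    have hg0 : (fun x => ENNReal.ofReal |g x|)
        =ᵐ[volume.restrict (Set.Ioi (0:ℝ))] 0 :=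
      (lintegral_eq_zero_iff hgm.abs.ennreal_ofReal).1 hA0
    have hB20 : B2 = 0 := by
      rw [hB2def, ← lintegral_zero]
      refine lintegral_congr_ae ?_
      filter_upwards [hg0] with x hx
      simp only [Pi.zero_apply] at hx
      have : g x = 0 := by
        have := ENNReal.ofReal_eq_zero.1 hx
        have := abs_nonneg (g x)
        have h0 : |g x| = 0 := le_antisymm (by linarith) (abs_nonneg _)
        exact abs_eq_zero.1 h0
      simp [this]
    rw [hB20, ENNReal.zero_rpow_of_pos (by norm_num)]
    exact zero_le
  by_cases hG0 : G = 0
  · -- gagliardo zero forces B2 = 0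
    have hB20 : B2 = 0 := by
      by_contra hB2ne
      set c := (2:ℝ≥0∞) * (A * A) with hcdef
      have hc : c ≠ ⊤ := ENNReal.mul_ne_top (by simp) (ENNReal.mul_ne_top hAtop hAtop)
      have hdivtop : c / B2 ≠ ⊤ := (ENNReal.div_lt_top hc hB2ne).ne
      set h₀ := (c / B2).toReal + 1 with hh₀def
      have hh₀ : 0 < h₀ := by positivity
      have hk := key_ineq r hr0 g hgm h₀ hh₀
      rw [← hGdef, hG0, mul_zero, add_zero, ← hAdef, ← hB2def, ← hcdef] at hk
      have hle : ENNReal.ofReal h₀ ≤ c / B2 :=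
        (ENNReal.le_div_iff_mul_le (Or.inl hB2ne) (Or.inl hB2top)).2 hk
      have hlt : c / B2 < ENNReal.ofReal h₀ := by
        rw [hh₀def, ENNReal.ofReal_add ENNReal.toReal_nonneg zero_le_one,
          ENNReal.ofReal_toReal hdivtop, ENNReal.ofReal_one]
        exact ENNReal.lt_add_right hdivtop one_ne_zero
      exact absurd hle hlt.not_ge
    rw [hB20, ENNReal.zero_rpow_of_pos (by norm_num)]
    exact zero_le
  -- generic case
  have ha : 0 < A.toReal := ENNReal.toReal_pos hA0 hAtop
  have hgg : 0 < G.toReal := ENNReal.toReal_pos hG0 hGf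
  set a := A.toReal with hadef
  set gg := G.toReal with hggdef
  set h₀ := (a ^ 2 / gg) ^ ((1:ℝ)/(1 + 2*r)) with hh₀def
  have hh₀ : 0 < h₀ := Real.rpow_pos_of_pos (by positivity) _
  have hk := key_ineq r hr0 g hgm h₀ hh₀
  rw [← hGdef, ← hAdef, ← hB2def] at hk
  -- real form of the key inequality
  set b := B2.toReal with hbdef
  have hRHStop : (2:ℝ≥0∞) * (A * A) + ENNReal.ofReal (h₀ ^ (1 + 2*r)) * G ≠ ⊤ := by
    refine ENNReal.add_ne_top.2 ⟨?_, ?_⟩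
    · exact ENNReal.mul_ne_top (by simp) (ENNReal.mul_ne_top hAtop hAtop)
    · exact ENNReal.mul_ne_top ENNReal.ofReal_ne_top hGf
  have hkr : h₀ * b ≤ 2 * (a * a) + h₀ ^ (1 + 2*r) * gg := by
    have h1 : (ENNReal.ofReal h₀ * B2).toReal = h₀ * b := by
      rw [ENNReal.toReal_mul, ENNReal.toReal_ofReal hh₀.le]
    have h2 : ((2:ℝ≥0∞) * (A * A) + ENNReal.ofReal (h₀ ^ (1 + 2*r)) * G).toReal
        = 2 * (a * a) + h₀ ^ (1 + 2*r) * gg := by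
      rw [ENNReal.toReal_add
        (ENNReal.mul_ne_top (by simp) (ENNReal.mul_ne_top hAtop hAtop))
        (ENNReal.mul_ne_top ENNReal.ofReal_ne_top hGf),
        ENNReal.toReal_mul, ENNReal.toReal_mul, ENNReal.toReal_mul,
        ENNReal.toReal_ofReal (by positivity), ENNReal.toReal_ofNat]
    rw [← h1, ← h2]
    exact ENNReal.toReal_mono hRHStop hk
  have hPow : h₀ ^ (1 + 2*r) = a ^ 2 / gg := by
    rw [hh₀def, ← Real.rpow_mul (by positivity), one_div_mul_cancel hs_ne, Real.rpow_one]
  have hsplit : h₀ ^ (1 + 2*r) = h₀ * h₀ ^ (2*r) := by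
    rw [Real.rpow_add hh₀, Real.rpow_one]
  have ha2 : a ^ 2 = h₀ ^ (1 + 2*r) * gg := by
    rw [hPow]; field_simp
  have hb3 : b ≤ 3 * (h₀ ^ (2*r) * gg) := by
    have h5 : h₀ * b ≤ h₀ * (3 * (h₀ ^ (2*r) * gg)) := by
      calc h₀ * b ≤ 2 * (a * a) + h₀ ^ (1 + 2*r) * gg := hkr
        _ = 3 * (h₀ ^ (1 + 2*r) * gg) := by
            rw [show a * a = a ^ 2 from (sq a).symm, ha2]; ring
        _ = h₀ * (3 * (h₀ ^ (2*r) * gg)) := by rw [hsplit]; ring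
    exact le_of_mul_le_mul_left h5 hh₀
  -- identify h₀ ^ (2r) * gg
  have hq2 : (0:ℝ) < gg ^ (2*r/(1+2*r)) := Real.rpow_pos_of_pos hgg _
  have e1 : h₀ ^ (2*r) = (a^2/gg) ^ (2*r/(1+2*r)) := by
    rw [hh₀def, ← Real.rpow_mul (by positivity)]
    congr 1
    field_simp
  have e2 : (a^2/gg) ^ (2*r/(1+2*r)) = a ^ (4*r/(1+2*r)) / gg ^ (2*r/(1+2*r)) := by
    rw [Real.div_rpow (by positivity) hgg.le]
    congr 1
    rw [← Real.rpow_natCast a 2, ← Real.rpow_mul ha.le]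
    congr 1
    push_cast
    ring
  have e3 : gg ^ ((1:ℝ)/(1+2*r)) * gg ^ (2*r/(1+2*r)) = gg := by
    rw [← Real.rpow_add hgg, ← add_div, div_self hs_ne, Real.rpow_one]
  have hdiv : gg / gg ^ (2*r/(1+2*r)) = gg ^ ((1:ℝ)/(1+2*r)) := by
    rw [eq_comm, eq_div_iff hq2.ne']
    exact e3
  have hfinal : h₀ ^ (2*r) * gg = a ^ (4*r/(1+2*r)) * gg ^ ((1:ℝ)/(1+2*r)) := by
    rw [e1, e2, div_mul_eq_mul_div, mul_div_assoc, hdiv]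
  have hbfinal : b ≤ 3 * (a ^ (4*r/(1+2*r)) * gg ^ ((1:ℝ)/(1+2*r))) := by
    rw [← hfinal]; exact hb3
  -- back to ENNReal
  have hB2le : B2 ≤ ENNReal.ofReal 3 * (A ^ (4*r/(1+2*r)) * G ^ ((1:ℝ)/(1+2*r))) := by
    have : B2 = ENNReal.ofReal b := (ENNReal.ofReal_toReal hB2top).symm
    rw [this]
    calc ENNReal.ofReal b
        ≤ ENNReal.ofReal (3 * (a ^ (4*r/(1+2*r)) * gg ^ ((1:ℝ)/(1+2*r)))) :=
          ENNReal.ofReal_le_ofReal hbfinal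
      _ = ENNReal.ofReal 3 * (A ^ (4*r/(1+2*r)) * G ^ ((1:ℝ)/(1+2*r))) := by
          rw [ENNReal.ofReal_mul (by norm_num), ENNReal.ofReal_mul (by positivity),
            ← ENNReal.ofReal_rpow_of_pos ha, ← ENNReal.ofReal_rpow_of_pos hgg,
            hadef, hggdef, ENNReal.ofReal_toReal hAtop, ENNReal.ofReal_toReal hGf]
  calc B2 ^ (1/2:ℝ)
      ≤ (ENNReal.ofReal 3 * (A ^ (4*r/(1+2*r)) * G ^ ((1:ℝ)/(1+2*r)))) ^ (1/2:ℝ) :=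
        ENNReal.rpow_le_rpow hB2le (by norm_num)
    _ = (ENNReal.ofReal 3) ^ (1/2:ℝ)
          * (A ^ ((4*r/(1+2*r)) * (1/2)) * G ^ (((1:ℝ)/(1+2*r)) * (1/2))) := by
        rw [ENNReal.mul_rpow_of_nonneg _ _ (by norm_num),
          ENNReal.mul_rpow_of_nonneg _ _ (by norm_num),
          ← ENNReal.rpow_mul, ← ENNReal.rpow_mul]
    _ = (ENNReal.ofReal 3) ^ (1/2:ℝ) * (A ^ (2*r/(1+2*r)) * G ^ (1/(2*(1+2*r)))) := by
        rw [show (4*r/(1+2*r)) * (1/2:ℝ) = 2*r/(1+2*r) by field_simp; ring,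
          show ((1:ℝ)/(1+2*r)) * (1/2:ℝ) = 1/(2*(1+2*r)) by field_simp]
    _ ≤ ENNReal.ofReal 2 * (A ^ (2*r/(1+2*r)) * G ^ (1/(2*(1+2*r)))) :=
        mul_le_mul_left sqrt3_le _
    _ = ENNReal.ofReal 2 * A ^ (2*r/(1+2*r)) * G ^ (1/(2*(1+2*r))) := by ring
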